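/- Let F be a CDF with E[X_+] < ∞, M = sup{x : F(x) < 1}, φ(x) = ∫_x^∞ (1 − F(u)) du, and let μ₀ satisfy 0 ≤ μ₀ < M. Then the function Ψ(x) = ∫_{μ₀}^x du/φ(u), defined on [μ₀, M), is strictly increasing, strictly convex, continuously differentiable with Ψ'(x) = 1/φ(x), and satisfies lim_{x→M⁻} Ψ(x) = +∞. -/

import Mathlib

open MeasureTheory Set Filter
open scoped ENNReal NNReal

section Aux
variable {g : ℝ → ℝ} (hg_anti : Antitone g) (hg0 : ∀ u, 0 ≤ g u) (hg1 : ∀ u, g u ≤ 1)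
  (hgi : IntegrableOn g (Ioi (0:ℝ)))

include hg_anti hg0 hg1 hgi

lemma aux_int (x : ℝ) : IntegrableOn g (Ioi x) := by
  rcases le_or_gt 0 x with h | h
  · exact hgi.mono_set (Ioi_subset_Ioi h)
  · rw [← Ioc_union_Ioi_eq_Ioi h.le]
    refine IntegrableOn.union ?_ hgi
    refine Measure.integrableOn_of_bounded (by rw [Real.volume_Ioc]; exact ENNReal.ofReal_ne_top) (hg_anti.measurable.aestronglyMeasurable) (M := 1) ?_
    filter_upwards with u
    rw [Real.norm_eq_abs, abs_of_nonneg (hg0 u)]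
    exact hg1 u

lemma aux_split {a b : ℝ} (h : a ≤ b) :
    (∫ u in Ioi a, g u) = (∫ u in Ioc a b, g u) + ∫ u in Ioi b, g u := by
  rw [← Ioc_union_Ioi_eq_Ioi h]
  exact setIntegral_union Ioc_disjoint_Ioi_same measurableSet_Ioi
    ((aux_int hg_anti hg0 hg1 hgi a).mono_set Ioc_subset_Ioi_self)
    (aux_int hg_anti hg0 hg1 hgi b)

lemma aux_anti : Antitone (fun x => ∫ u in Ioi x, g u) := by
  intro a b h
  simp only
  rw [aux_split hg_anti hg0 hg1 hgi h]
  have : 0 ≤ ∫ u in Ioc a b, g u :=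
    setIntegral_nonneg measurableSet_Ioc (fun u _ => hg0 u)
  linarith

lemma aux_diff_le {a b : ℝ} (h : a ≤ b) :
    (∫ u in Ioi a, g u) - (∫ u in Ioi b, g u) ≤ b - a := by
  rw [aux_split hg_anti hg0 hg1 hgi h]
  have : (∫ u in Ioc a b, g u) ≤ ∫ u in Ioc a b, (1:ℝ) := by
    refine setIntegral_mono_on ((aux_int hg_anti hg0 hg1 hgi a).mono_set Ioc_subset_Ioi_self)
      (integrableOn_const (by simp)) measurableSet_Ioc (fun u _ => hg1 u)
  simp only [setIntegral_const, smul_eq_mul, mul_one] at this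
  rw [Real.volume_real_Ioc_of_le h] at this
  linarith

lemma aux_cont : Continuous (fun x => ∫ u in Ioi x, g u) := by
  have : LipschitzWith 1 (fun x => ∫ u in Ioi x, g u) := by
    refine LipschitzWith.of_dist_le_mul (fun a b => ?_)
    simp only [NNReal.coe_one, one_mul, Real.dist_eq]
    rcases le_total a b with h | h
    · have h1 := aux_diff_le hg_anti hg0 hg1 hgi h
      have h2 := aux_anti hg_anti hg0 hg1 hgi h
      simp only at h2
      rw [abs_of_nonneg (by linarith), abs_of_nonpos (by linarith)]
      linarith
    · have h1 := aux_diff_le hg_anti hg0 hg1 hgi h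
      have h2 := aux_anti hg_anti hg0 hg1 hgi h
      simp only at h2
      rw [abs_of_nonpos (by linarith), abs_of_nonneg (by linarith)]
      linarith
  exact this.continuous

lemma aux_lb_Ioc {x y : ℝ} (h : x < y) : (y - x) * g y ≤ ∫ u in Ioc x y, g u := by
  have h2 : (∫ u in Ioc x y, (g y : ℝ)) ≤ ∫ u in Ioc x y, g u := by
    refine setIntegral_mono_on (integrableOn_const (by simp))
      ((aux_int hg_anti hg0 hg1 hgi x).mono_set Ioc_subset_Ioi_self)
      measurableSet_Ioc (fun u hu => hg_anti hu.2)
  rwa [setIntegral_const, smul_eq_mul, Real.volume_real_Ioc_of_le h.le] at h2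

lemma aux_lb {x y : ℝ} (h : x < y) : (y - x) * g y ≤ ∫ u in Ioi x, g u := by
  have h1 : (∫ u in Ioc x y, g u) ≤ ∫ u in Ioi x, g u :=
    setIntegral_mono_set (aux_int hg_anti hg0 hg1 hgi x)
      (ae_of_all _ fun u => hg0 u) (HasSubset.Subset.eventuallyLE Ioc_subset_Ioi_self)
  exact le_trans (aux_lb_Ioc hg_anti hg0 hg1 hgi h) h1

end Aux

lemma aux_prob {Ω : Type*} [MeasurableSpace Ω] (P : Measure Ω) [IsProbabilityMeasure P]
    (X : Ω → ℝ) (hX : Measurable X)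
    (hint : Integrable (fun ω => max (X ω) 0) P)
    (F : ℝ → ℝ) (hF : ∀ x, F x = (P {ω | X ω ≤ x}).toReal) :
    IntegrableOn (fun u => 1 - F u) (Ioi (0:ℝ)) := by
  have hcompl : ∀ u : ℝ, 1 - F u = (P {ω | u < X ω}).toReal := by
    intro u
    have hset : {ω | u < X ω} = {ω | X ω ≤ u}ᶜ := by ext ω; simp [not_le]
    rw [hset, prob_compl_eq_one_sub (measurableSet_le hX measurable_const), hF,
      ENNReal.toReal_sub_of_le prob_le_one ENNReal.one_ne_top, ENNReal.toReal_one]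
  have hPanti : Antitone (fun u : ℝ => P {ω | u < X ω}) := by
    intro a b hab
    exact measure_mono (fun ω (h : b < X ω) => lt_of_le_of_lt hab h)
  have hmeas : Measurable (fun u : ℝ => P {ω | u < X ω}) := hPanti.measurable
  have key : ∫⁻ u in Ioi (0:ℝ), P {ω | u < X ω} ≠ ⊤ := by
    have lc := lintegral_eq_lintegral_meas_lt P (f := fun ω => max (X ω) 0)
      (ae_of_all _ fun ω => le_max_right _ _) ((hX.max measurable_const).aemeasurable)
    have heq : ∫⁻ u in Ioi (0:ℝ), P {a | u < max (X a) 0} = ∫⁻ u in Ioi (0:ℝ), P {ω | u < X ω} := by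
      refine setLIntegral_congr_fun measurableSet_Ioi (fun u hu => ?_)
      congr 1
      ext a
      simp only [mem_setOf_eq, lt_max_iff]
      exact ⟨fun h => h.resolve_right (fun h' => absurd hu (not_lt.2 h'.le)), Or.inl⟩
    rw [← heq, ← lc]
    have : HasFiniteIntegral (fun ω => max (X ω) 0) P := hint.hasFiniteIntegral
    rw [HasFiniteIntegral] at this
    refine ne_of_lt (lt_of_le_of_lt (lintegral_mono fun ω => ?_) this)
    rw [← Real.enorm_eq_ofReal (le_max_right _ _)]
  have h2 := integrable_toReal_of_lintegral_ne_top hmeas.aemeasurable.restrict key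
  have heq : (fun u : ℝ => 1 - F u) = fun u => (P {ω | u < X ω}).toReal := funext hcompl
  rw [heq]
  exact h2

/-- Ψ(x) = ∫_{μ₀}^x du/φ(u) on [μ₀, M) is strictly increasing, strictly convex,
continuously differentiable with Ψ'(x) = 1/φ(x), and Ψ(x) → +∞ as x → M⁻. -/
theorem stmt5 {Ω : Type*} [MeasurableSpace Ω] (P : Measure Ω) [IsProbabilityMeasure P]
    (X : Ω → ℝ) (hX : Measurable X)
    (hint : Integrable (fun ω => max (X ω) 0) P)
    (F : ℝ → ℝ) (hF : ∀ x, F x = (P {ω | X ω ≤ x}).toReal)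
    (M : EReal) (hM : M = sSup ((fun x : ℝ => (x : EReal)) '' {x : ℝ | F x < 1}))
    (φ : ℝ → ℝ) (hφ : ∀ x, φ x = ∫ u in Ioi x, (1 - F u))
    (μ₀ : ℝ) (hμ₀ : 0 ≤ μ₀) (hμ₀M : (μ₀ : EReal) < M)
    (Ψ : ℝ → ℝ) (hΨ : ∀ x, Ψ x = ∫ u in μ₀..x, (φ u)⁻¹) :
    StrictMonoOn Ψ {x : ℝ | μ₀ ≤ x ∧ (x : EReal) < M} ∧
    StrictConvexOn ℝ {x : ℝ | μ₀ ≤ x ∧ (x : EReal) < M} Ψ ∧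
    (∀ x : ℝ, μ₀ ≤ x → (x : EReal) < M → HasDerivAt Ψ (1 / φ x) x) ∧
    ContinuousOn (fun x => 1 / φ x) {x : ℝ | μ₀ ≤ x ∧ (x : EReal) < M} ∧
    Tendsto Ψ (Filter.comap (fun x : ℝ => (x : EReal)) (nhdsWithin M (Iio M))) atTop := by
  set g : ℝ → ℝ := fun u => 1 - F u with hg
  -- basic facts about F and g
  have hFmono : Monotone F := by
    intro a b hab
    rw [hF, hF]
    exact ENNReal.toReal_mono (measure_ne_top _ _)
      (measure_mono (fun ω (h : X ω ≤ a) => h.trans hab))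
  have hF0 : ∀ x, 0 ≤ F x := fun x => by rw [hF]; exact ENNReal.toReal_nonneg
  have hF1 : ∀ x, F x ≤ 1 := by
    intro x
    rw [hF]
    calc (P {ω | X ω ≤ x}).toReal ≤ (1 : ℝ≥0∞).toReal :=
        ENNReal.toReal_mono ENNReal.one_ne_top prob_le_one
    _ = 1 := ENNReal.toReal_one
  have hg_anti : Antitone g := fun a b hab => by simp only [hg]; linarith [hFmono hab]
  have hg0 : ∀ u, 0 ≤ g u := fun u => by simp only [hg]; linarith [hF1 u]
  have hg1 : ∀ u, g u ≤ 1 := fun u => by simp only [hg]; linarith [hF0 u]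
  have hgi : IntegrableOn g (Ioi (0:ℝ)) := aux_prob P X hX hint F hF
  have hφ' : φ = fun x => ∫ u in Ioi x, g u := funext hφ
  -- basic facts about φ
  have hφanti : Antitone φ := hφ' ▸ aux_anti hg_anti hg0 hg1 hgi
  have hφcont : Continuous φ := hφ' ▸ aux_cont hg_anti hg0 hg1 hgi
  have hφsplit : ∀ {a b : ℝ}, a ≤ b → φ a = (∫ u in Ioc a b, g u) + φ b := by
    intro a b h; rw [hφ']; exact aux_split hg_anti hg0 hg1 hgi h
  have hφdiff : ∀ {a b : ℝ}, a ≤ b → φ a - φ b ≤ b - a := by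
    intro a b h; rw [hφ']; exact aux_diff_le hg_anti hg0 hg1 hgi h
  -- below M
  have exists_gt : ∀ x : ℝ, (x : EReal) < M → ∃ y, x < y ∧ F y < 1 := by
    intro x hx
    rw [hM] at hx
    rcases lt_sSup_iff.1 hx with ⟨b, hb, hxb⟩
    obtain ⟨y, hy, rfl⟩ := hb
    exact ⟨y, EReal.coe_lt_coe_iff.1 hxb, hy⟩
  have FltM : ∀ x : ℝ, (x : EReal) < M → F x < 1 := by
    intro x hx
    obtain ⟨y, h1, h2⟩ := exists_gt x hx
    exact lt_of_le_of_lt (hFmono h1.le) h2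
  have hφpos : ∀ x : ℝ, (x : EReal) < M → 0 < φ x := by
    intro x hx
    obtain ⟨y, h1, h2⟩ := exists_gt x hx
    have hlb : (y - x) * g y ≤ φ x := hφ' ▸ aux_lb hg_anti hg0 hg1 hgi h1
    have : 0 < (y - x) * g y := by
      apply mul_pos (by linarith)
      simp only [hg]; linarith
    linarith
  -- strict antitonicity of φ below M
  have hφstrict : ∀ {x y : ℝ}, x < y → (y : EReal) < M → φ y < φ x := by
    intro x y hxy hyM
    have h1 : (y - x) * g y ≤ ∫ u in Ioc x y, g u := aux_lb_Ioc hg_anti hg0 hg1 hgi hxy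
    have h2 : 0 < (y - x) * g y := by
      apply mul_pos (by linarith)
      simp only [hg]; linarith [FltM y hyM]
    have := hφsplit hxy.le
    linarith
  -- the open set U
  set U : Set ℝ := {x : ℝ | (x : EReal) < M} with hU
  have hUopen : IsOpen U := isOpen_Iio.preimage continuous_coe_real_ereal
  have hUlower : ∀ {a b : ℝ}, a ≤ b → b ∈ U → a ∈ U := by
    intro a b hab hb
    exact lt_of_le_of_lt (EReal.coe_le_coe_iff.2 hab) hb
  have hinv_contOn : ContinuousOn (fun x => (φ x)⁻¹) U :=
    ContinuousOn.inv₀ hφcont.continuousOn (fun x hx => (hφpos x hx).ne')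
  -- interval integrability
  have hII : ∀ {a b : ℝ}, a ∈ U → b ∈ U → IntervalIntegrable (fun u => (φ u)⁻¹) volume a b := by
    intro a b ha hb
    refine (hinv_contOn.mono ?_).intervalIntegrable
    intro z hz
    rcases le_total a b with h | h
    · rw [uIcc_of_le h] at hz; exact hUlower (hz.2.trans (le_refl b)) hb
    · rw [uIcc_of_ge h] at hz; exact hUlower hz.2 ha
  have hμ₀U : μ₀ ∈ U := hμ₀M
  -- derivative
  have hΨfun : Ψ = fun x => ∫ u in μ₀..x, (φ u)⁻¹ := funext hΨ
  have hderivAt : ∀ x : ℝ, x ∈ U → HasDerivAt Ψ ((φ x)⁻¹) x := by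
    intro x hx
    rw [hΨfun]
    exact intervalIntegral.integral_hasDerivAt_right (hII hμ₀U hx)
      (hinv_contOn.stronglyMeasurableAtFilter hUopen x hx)
      (hinv_contOn.continuousAt (hUopen.mem_nhds hx))
  -- the set S
  set S : Set ℝ := {x : ℝ | μ₀ ≤ x ∧ (x : EReal) < M} with hS
  have hSU : S ⊆ U := fun x hx => hx.2
  have hSconv : Convex ℝ S := by
    refine Set.OrdConnected.convex ⟨fun a ha b hb z hz => ⟨ha.1.trans hz.1, hUlower hz.2 hb.2⟩⟩
  have hΨcontOn : ContinuousOn Ψ S := fun x hx =>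
    (hderivAt x (hSU hx)).continuousAt.continuousWithinAt
  have hintS : interior S ⊆ S := interior_subset
  have hderiv_eq : ∀ x ∈ interior S, deriv Ψ x = (φ x)⁻¹ := fun x hx =>
    (hderivAt x (hSU (hintS hx))).deriv
  -- strict mono
  have hmono : StrictMonoOn Ψ S := by
    refine strictMonoOn_of_deriv_pos hSconv hΨcontOn (fun x hx => ?_)
    rw [hderiv_eq x hx]
    exact inv_pos.2 (hφpos x (hSU (hintS hx)))
  -- strict convexity
  have hconv : StrictConvexOn ℝ S Ψ := by
    refine StrictMonoOn.strictConvexOn_of_deriv hSconv hΨcontOn ?_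
    intro a ha b hb hab
    rw [hderiv_eq a ha, hderiv_eq b hb]
    have hbU : b ∈ U := hSU (hintS hb)
    exact inv_strictAnti₀ (hφpos b hbU) (hφstrict hab hbU)
  -- derivative statement
  have hHasDeriv : ∀ x : ℝ, μ₀ ≤ x → (x : EReal) < M → HasDerivAt Ψ (1 / φ x) x := by
    intro x _ hx
    rw [one_div]
    exact hderivAt x hx
  have hcontinv : ContinuousOn (fun x => 1 / φ x) S := by
    simp only [one_div]
    exact hinv_contOn.mono hSU
  refine ⟨hmono, hconv, hHasDeriv, hcontinv, ?_⟩
  -- φ can be halved below M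
  have half : ∀ x : ℝ, (x : EReal) < M → ∃ y, x < y ∧ (y : EReal) < M ∧ φ y ≤ φ x / 2 := by
    intro x hx
    by_cases hMtop : M = ⊤
    · -- M = ⊤ : use monotone convergence along Ioc x (x+n+1)
      set s : ℕ → Set ℝ := fun n => Ioc x (x + (n : ℝ) + 1) with hs
      have hsm : ∀ n, MeasurableSet (s n) := fun n => measurableSet_Ioc
      have hsmono : Monotone s := by
        intro a b hab
        apply Ioc_subset_Ioc_right
        have : (a : ℝ) ≤ (b : ℝ) := Nat.cast_le.2 hab
        linarith
      have hUnion : ⋃ n, s n = Ioi x := by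
        ext u
        simp only [hs, mem_iUnion, mem_Ioc, mem_Ioi]
        constructor
        · rintro ⟨n, h1, _⟩; exact h1
        · intro hu
          obtain ⟨n, hn⟩ := exists_nat_ge (u - x)
          exact ⟨n, hu, by linarith⟩
      have hint' : IntegrableOn g (⋃ n, s n) := by
        rw [hUnion]; exact aux_int hg_anti hg0 hg1 hgi x
      have ht := tendsto_setIntegral_of_monotone hsm hsmono hint'
      rw [hUnion] at ht
      have hφx : (∫ u in Ioi x, g u) = φ x := (hφ x).symm
      rw [hφx] at ht
      have hhalf : φ x / 2 < φ x := half_lt_self (hφpos x hx)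
      obtain ⟨n, hn⟩ := ((tendsto_order.1 ht).1 _ hhalf).exists
      refine ⟨x + (n : ℝ) + 1, by linarith [Nat.cast_nonneg (α := ℝ) n], ?_, ?_⟩
      · rw [hMtop]; exact EReal.coe_lt_top _
      · have hsplit := hφsplit (show x ≤ x + (n : ℝ) + 1 by linarith [Nat.cast_nonneg (α := ℝ) n])
        simp only [hs] at hn
        linarith
    · -- M finite
      have hMbot : M ≠ ⊥ := fun h => by rw [h] at hμ₀M; exact absurd hμ₀M (by simp)
      set m : ℝ := M.toReal with hm
      have hMm : M = (m : EReal) := (EReal.coe_toReal hMtop hMbot).symm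
      have hxm : x < m := EReal.coe_lt_coe_iff.1 (by rw [← hMm]; exact hx)
      have gzero : ∀ u, m < u → g u = 0 := by
        intro u hu
        have hFu : ¬ F u < 1 := by
          intro hlt
          have h1 : (u : EReal) ≤ M := hM ▸ le_sSup ⟨u, hlt, rfl⟩
          rw [hMm] at h1
          exact absurd (EReal.coe_le_coe_iff.1 h1) (not_le.2 hu)
        have : F u = 1 := le_antisymm (hF1 u) (not_lt.1 hFu)
        simp only [hg, this, sub_self]
      have hφm : φ m = 0 := by
        rw [hφ]
        exact setIntegral_eq_zero_of_forall_eq_zero (fun u hu => gzero u hu)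
      have hφle : ∀ y, y ≤ m → φ y ≤ m - y := by
        intro y hy
        have := hφdiff hy
        linarith
      set d : ℝ := min ((m - x) / 2) (φ x / 2) with hd
      have hdpos : 0 < d := lt_min (by linarith) (half_pos (hφpos x hx))
      refine ⟨m - d, ?_, ?_, ?_⟩
      · have : d ≤ (m - x) / 2 := min_le_left _ _
        linarith
      · rw [hMm]
        exact EReal.coe_lt_coe_iff.2 (by linarith)
      · have h1 : φ (m - d) ≤ m - (m - d) := hφle _ (by linarith)
        have h2 : d ≤ φ x / 2 := min_le_right _ _
        linarith
  -- step: Ψ increases by at least 1/2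
  have step : ∀ x : ℝ, μ₀ ≤ x → (x : EReal) < M →
      ∃ y, x < y ∧ μ₀ ≤ y ∧ (y : EReal) < M ∧ Ψ x + 1 / 2 ≤ Ψ y := by
    intro x hμx hx
    obtain ⟨y, hxy, hyM, hhalf⟩ := half x hx
    have hxU : x ∈ U := hx
    have hyU : y ∈ U := hyM
    have hadd := intervalIntegral.integral_add_adjacent_intervals
      (hII hμ₀U hxU) (hII hxU hyU)
    have hΨy : Ψ y = Ψ x + ∫ u in x..y, (φ u)⁻¹ := by
      rw [hΨ, hΨ, ← hadd]
    have hlow : (y - x) * (φ x)⁻¹ ≤ ∫ u in x..y, (φ u)⁻¹ := by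
      have hc : (∫ u in x..y, (fun _ : ℝ => (φ x)⁻¹) u) ≤ ∫ u in x..y, (φ u)⁻¹ := by
        refine intervalIntegral.integral_mono_on hxy.le intervalIntegrable_const
          (hII hxU hyU) (fun u hu => ?_)
        have huU : u ∈ U := hUlower hu.2 hyU
        exact inv_anti₀ (hφpos u huU) (hφanti hu.1)
      rw [intervalIntegral.integral_const, smul_eq_mul] at hc
      exact hc
    have hdle : φ x - φ y ≤ y - x := hφdiff hxy.le
    have hφxpos : 0 < φ x := hφpos x hx
    have hge : φ x / 2 ≤ y - x := by linarith
    have h12 : 1 / 2 ≤ (y - x) * (φ x)⁻¹ := by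
      have := mul_le_mul_of_nonneg_right hge (inv_nonneg.2 hφxpos.le)
      have heq : φ x / 2 * (φ x)⁻¹ = 1 / 2 := by field_simp
      linarith
    exact ⟨y, hxy, hμx.trans hxy.le, hyM, by linarith⟩
  -- unboundedness
  have hΨ0 : Ψ μ₀ = 0 := by rw [hΨ, intervalIntegral.integral_same]
  have unbdd : ∀ n : ℕ, ∃ x : ℝ, μ₀ ≤ x ∧ (x : EReal) < M ∧ (n : ℝ) / 2 ≤ Ψ x := by
    intro n
    induction n with
    | zero => exact ⟨μ₀, le_refl _, hμ₀M, by rw [hΨ0]; norm_num⟩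
    | succ k ih =>
      obtain ⟨x, hμx, hx, hΨx⟩ := ih
      obtain ⟨y, hxy, hμy, hy, hΨy⟩ := step x hμx hx
      refine ⟨y, hμy, hy, ?_⟩
      push_cast
      linarith
  -- conclusion
  rw [tendsto_atTop]
  intro b
  obtain ⟨n, hn⟩ := exists_nat_ge (2 * b)
  obtain ⟨x₀, hμx₀, hx₀M, hΨx₀⟩ := unbdd n
  have hmem : Ioo (x₀ : EReal) M ∈ nhdsWithin M (Iio M) :=
    mem_nhdsWithin.2 ⟨Ioi (x₀ : EReal), isOpen_Ioi, hx₀M, fun z hz => ⟨hz.1, hz.2⟩⟩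
  refine eventually_comap.2 ?_
  filter_upwards [hmem] with z hz x hxz
  rw [← hxz] at hz
  have hx₀x : x₀ < x := EReal.coe_lt_coe_iff.1 hz.1
  have hxS : x ∈ S := ⟨hμx₀.trans hx₀x.le, hz.2⟩
  have hmon := hmono.monotoneOn ⟨hμx₀, hx₀M⟩ hxS hx₀x.le
  have : b ≤ (n : ℝ) / 2 := by linarith
  linarith
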